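/- Existence of a row-incoherent orthonormal matrix. Let r ≥ 1 and s be integers with s ≥ 3r. Then there exists a matrix V* ∈ ℝ^{(s−r)×r} with (V*)ᵀV* = I_r such that every row of V* satisfies r/s ≤ ‖V*_{[k,:]}‖_2² ≤ r/(s−2r) for all k = 1,…,s−r, where V*_{[k,:]} denotes the k-th row and ‖·‖_2 the Euclidean norm. -/
import Mathlib


open Matrix BigOperators

noncomputable section

/-- Existence of a row-incoherent orthonormal matrix: for `s ≥ 3r` there is an
orthonormal `V* ∈ ℝ^{(s−r)×r}` all of whose rows have squared norm between
`r/s` and `r/(s−2r)`. -/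
theorem exists_row_incoherent_orthonormal (r s : ℕ) (hr : 1 ≤ r) (hs : 3 * r ≤ s) :
    ∃ V : Matrix (Fin (s - r)) (Fin r) ℝ,
      Vᵀ * V = 1 ∧
      ∀ k : Fin (s - r),
        (r : ℝ) / (s : ℝ) ≤ ∑ j, V k j ^ 2 ∧
        ∑ j, V k j ^ 2 ≤ (r : ℝ) / ((s : ℝ) - 2 * (r : ℝ)) := by
  have hr0 : 0 < r := hr
  set m := s - r with hm
  have hrs : r ≤ s := by omega
  have h2r : 2 * r ≤ m := by omega
  set q := m / r with hq
  set t := m % r with ht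
  have htr : t < r := Nat.mod_lt _ hr0
  have hqt : q * r + t = m := by rw [hq, ht, mul_comm]; exact Nat.div_add_mod m r
  have hq2 : 2 ≤ q := by
    rw [hq, Nat.le_div_iff_mul_le hr0]; omega
  -- group sizes
  set c : Fin r → ℕ := fun j => q + if (j : ℕ) < t then 1 else 0 with hc
  have hc_pos : ∀ j, 0 < c j := fun j => by
    simp only [hc]; split_ifs <;> omega
  -- the matrix
  set V : Matrix (Fin m) (Fin r) ℝ := fun k j =>
    if (k : ℕ) % r = (j : ℕ) then (Real.sqrt (c j))⁻¹ else 0 with hV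
  -- cardinality of each group
  have hcard : ∀ j : Fin r,
      (Finset.univ.filter fun k : Fin m => (k : ℕ) % r = (j : ℕ)).card = c j := by
    intro j
    have hcnt := Nat.count_modEq_card m hr0 (j : ℕ)
    rw [Nat.count_eq_card_filter_range] at hcnt
    have hmodeq : ∀ x : ℕ, (x ≡ (j : ℕ) [MOD r]) ↔ x % r = (j : ℕ) := by
      intro x
      rw [Nat.ModEq, Nat.mod_eq_of_lt j.isLt]
    have : ((Finset.range m).filter fun x => x % r = (j : ℕ)).card = c j := by
      rw [show ((Finset.range m).filter fun x => x % r = (j : ℕ))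
          = ((Finset.range m).filter fun x => x ≡ (j : ℕ) [MOD r]) from by
        apply Finset.filter_congr; intro x _; simp [hmodeq x], hcnt]
      simp only [hc, hq, ht, Nat.mod_eq_of_lt j.isLt]
    rw [← this]
    rw [Finset.card_filter, Finset.card_filter]
    exact Fin.sum_univ_eq_sum_range (fun x => if x % r = (j : ℕ) then 1 else 0) m
  refine ⟨V, ?_, ?_⟩
  · ext i j
    rw [Matrix.mul_apply]
    simp only [Matrix.transpose_apply]
    by_cases hij : i = j
    · subst hij
      have : ∀ k : Fin m, V k i * V k i =
          if (k : ℕ) % r = (i : ℕ) then ((c i : ℝ))⁻¹ else 0 := by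
        intro k
        simp only [hV]
        split_ifs with h
        · rw [← Real.sqrt_inv, Real.mul_self_sqrt (by positivity)]
        · ring
      rw [Finset.sum_congr rfl fun k _ => this k, ← Finset.sum_filter,
        Finset.sum_const, hcard i, nsmul_eq_mul, Matrix.one_apply_eq,
        mul_inv_cancel₀ (by exact_mod_cast (hc_pos i).ne')]
    · rw [Finset.sum_eq_zero, Matrix.one_apply_ne hij]
      intro k _
      simp only [hV]
      by_cases h1 : (k : ℕ) % r = (i : ℕ)
      · have h2 : ¬ ((k : ℕ) % r = (j : ℕ)) := by
          intro h2; exact hij (Fin.ext (h1 ▸ h2 ▸ rfl))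
        rw [if_neg h2, mul_zero]
      · rw [if_neg h1, zero_mul]
  · intro k
    have hk : (k : ℕ) % r < r := Nat.mod_lt _ hr0
    set j0 : Fin r := ⟨(k : ℕ) % r, hk⟩ with hj0
    have hrow : ∑ j, V k j ^ 2 = ((c j0 : ℝ))⁻¹ := by
      have : ∀ j : Fin r, V k j ^ 2 = if j0 = j then ((c j : ℝ))⁻¹ else 0 := by
        intro j
        simp only [hV]
        by_cases h : j0 = j
        · rw [if_pos h, if_pos (show (k : ℕ) % r = (j : ℕ) from by rw [← h]),
            ← Real.sqrt_inv, Real.sq_sqrt (by positivity)]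
        · rw [if_neg h, if_neg (fun hh => h (Fin.ext hh))]
          ring
      rw [Finset.sum_congr rfl fun j _ => this j, Finset.sum_ite_eq]
      simp
    rw [hrow]
    have hcub : c j0 ≤ q + 1 := by simp only [hc]; split_ifs <;> omega
    have hclb : q ≤ c j0 := by simp only [hc]; split_ifs <;> omega
    have hs1 : r * (c j0) ≤ s := by
      calc r * c j0 ≤ r * (q + 1) := Nat.mul_le_mul_left _ hcub
        _ = q * r + r := by ring
        _ ≤ m + r := by omega
        _ = s := by omega
    have hs2 : s - 2 * r ≤ r * (c j0) := by
      calc s - 2 * r = m - r := by omega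
        _ ≤ q * r := by omega
        _ ≤ r * c j0 := by rw [mul_comm]; exact Nat.mul_le_mul_left _ hclb
    have hcpos : (0 : ℝ) < (c j0 : ℝ) := by exact_mod_cast hc_pos j0
    have hspos : (0 : ℝ) < (s : ℝ) := by
      have : 0 < s := by omega
      exact_mod_cast this
    have h2pos : (0 : ℝ) < (s : ℝ) - 2 * r := by
      have h1 : (3 : ℝ) * r ≤ s := by exact_mod_cast hs
      have h2 : (1 : ℝ) ≤ r := by exact_mod_cast hr
      linarith
    constructor
    · rw [inv_eq_one_div, div_le_div_iff₀ hspos hcpos, one_mul]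
      exact_mod_cast hs1
    · rw [inv_eq_one_div, div_le_div_iff₀ hcpos h2pos, one_mul]
      have h2rs : 2 * r ≤ s := by omega
      have hcast := (Nat.cast_le (α := ℝ)).mpr hs2
      rw [Nat.cast_sub h2rs] at hcast
      push_cast at hcast ⊢
      linarith

end
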